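/- Let s be a finite multiset of natural numbers each of which is at least 3 with ∑_{p ∈ s} (1/2 − 1/p) = 1 (as rational numbers). Then every element p of s satisfies p ≤ 42; that is, no face of size larger than 42 can occur at a vertex of combinatorial curvature 0. -/

import Mathlib

private lemma inv_pos_of_three_le {q : ℕ} (h : 3 ≤ q) : (0:ℚ) < 1 / q := by
  have : (0:ℚ) < q := by exact_mod_cast (by omega : 0 < q)
  positivity

private lemma inv_le_third {q : ℕ} (h : 3 ≤ q) : (1:ℚ) / q ≤ 1 / 3 := by
  have hq : (3:ℚ) ≤ q := by exact_mod_cast h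
  rw [div_le_div_iff₀ (by linarith) (by norm_num)]
  linarith

private lemma sum_lb (t : Multiset ℕ) (h : ∀ q ∈ t, 3 ≤ q) :
    (t.card : ℚ) * (1/6) ≤ (t.map (fun q : ℕ => (1:ℚ)/2 - 1/(q:ℚ))).sum := by
  induction t using Multiset.induction with
  | empty => simp
  | cons a u ih =>
    simp only [Multiset.map_cons, Multiset.sum_cons, Multiset.card_cons]
    have ha : 3 ≤ a := h a (Multiset.mem_cons_self a u)
    have h1 : (1:ℚ)/a ≤ 1/3 := inv_le_third ha
    have h2 := ih (fun q hq => h q (Multiset.mem_cons_of_mem hq))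
    rw [Nat.cast_add, Nat.cast_one]
    linarith

/-- In a finite multiset of naturals, each at least 3, with `∑ (1/2 − 1/p) = 1` (in ℚ),
every element is at most 42. -/
theorem curvature_zero_face_size_bound
    (s : Multiset ℕ) (h3 : ∀ p ∈ s, 3 ≤ p)
    (hsum : (s.map (fun p => (1 : ℚ) / 2 - 1 / (p : ℚ))).sum = 1) :
    ∀ p ∈ s, p ≤ 42 := by
  intro p hp
  simp only [Multiset.pure_def, Multiset.bind_def, Multiset.bind_singleton,
    Multiset.map_map] at hsum
  replace hsum : (s.map (fun q : ℕ => (1:ℚ)/2 - 1/(q:ℚ))).sum = 1 := hsum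
  by_contra hcon
  push_neg at hcon
  have hp43 : 43 ≤ p := hcon
  obtain ⟨t, rfl⟩ := Multiset.exists_cons_of_mem hp
  have ht3 : ∀ q ∈ t, 3 ≤ q := fun q hq => h3 q (Multiset.mem_cons_of_mem hq)
  simp only [Multiset.map_cons, Multiset.sum_cons] at hsum
  have hppos : (0:ℚ) < 1 / p := inv_pos_of_three_le (by omega)
  have hple : (1:ℚ) / p ≤ 1 / 43 := by
    have hq : (43:ℚ) ≤ p := by exact_mod_cast hp43
    rw [div_le_div_iff₀ (by linarith) (by norm_num)]
    linarith
  -- the rest of the sum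
  have hT : (t.map (fun q : ℕ => (1:ℚ)/2 - 1/(q:ℚ))).sum = 1/2 + 1/p := by linarith
  have hlb := sum_lb t ht3
  rw [hT] at hlb
  have hcard : t.card ≤ 3 := by
    by_contra hc
    push_neg at hc
    have : (4:ℚ) ≤ t.card := by exact_mod_cast hc
    linarith
  interval_cases hc : t.card
  · -- card 0
    have : t = 0 := Multiset.card_eq_zero.mp hc
    subst this
    simp only [Multiset.map_zero, Multiset.sum_zero] at hT
    linarith
  · -- card 1
    obtain ⟨a, rfl⟩ := Multiset.card_eq_one.mp hc
    have ha := inv_pos_of_three_le (ht3 a (by simp))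
    simp only [Multiset.map_singleton, Multiset.sum_singleton] at hT
    linarith
  · -- card 2
    obtain ⟨a, b, rfl⟩ := Multiset.card_eq_two.mp hc
    have ha3 : 3 ≤ a := ht3 a (by simp)
    have hb3 : 3 ≤ b := ht3 b (by simp)
    have hb := inv_le_third hb3
    have hbpos := inv_pos_of_three_le hb3
    have ha := inv_le_third ha3
    have hapos := inv_pos_of_three_le ha3
    simp only [Multiset.insert_eq_cons, Multiset.map_cons, Multiset.sum_cons,
      Multiset.map_singleton, Multiset.sum_singleton] at hT
    -- 1/a + 1/b = 1/2 - 1/p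
    have key : (1:ℚ)/p = 1/2 - 1/a - 1/b := by linarith
    have ha7 : a ≤ 6 := by
      have h1 : (1:ℚ)/a ≥ 37/258 := by linarith
      have h2 : (a:ℚ) ≤ 258/37 := by
        rw [ge_iff_le, div_le_div_iff₀ (by norm_num) (by exact_mod_cast (by omega : 0 < a))] at h1
        linarith
      have : (a:ℚ) < 7 := by linarith
      exact_mod_cast Nat.lt_succ_iff.mp (by exact_mod_cast this)
    have hb7 : b ≤ 6 := by
      have h1 : (1:ℚ)/b ≥ 37/258 := by linarith
      have h2 : (b:ℚ) ≤ 258/37 := by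
        rw [ge_iff_le, div_le_div_iff₀ (by norm_num) (by exact_mod_cast (by omega : 0 < b))] at h1
        linarith
      have : (b:ℚ) < 7 := by linarith
      exact_mod_cast Nat.lt_succ_iff.mp (by exact_mod_cast this)
    rw [key] at hppos hple
    interval_cases a <;> interval_cases b <;> revert hppos hple <;> norm_num
  · -- card 3
    obtain ⟨a, b, c, rfl⟩ := Multiset.card_eq_three.mp hc
    have ha3 : 3 ≤ a := ht3 a (by simp)
    have hb3 : 3 ≤ b := ht3 b (by simp)
    have hc3 : 3 ≤ c := ht3 c (by simp)
    have ha := inv_le_third ha3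
    have hb := inv_le_third hb3
    have hcc := inv_le_third hc3
    simp only [Multiset.insert_eq_cons, Multiset.map_cons, Multiset.sum_cons,
      Multiset.map_singleton, Multiset.sum_singleton] at hT
    -- 1/a + 1/b + 1/c = 1 - 1/p ≥ 42/43
    have key : (1:ℚ)/a + 1/b + 1/c = 1 - 1/p := by linarith
    have hbig : (42:ℚ)/43 ≤ 1/a + 1/b + 1/c := by linarith
    have ea : a = 3 := by
      have h1 : (1:ℚ)/a ≥ 40/129 := by linarith
      have h2 : (a:ℚ) ≤ 129/40 := by
        rw [ge_iff_le, div_le_div_iff₀ (by norm_num) (by exact_mod_cast (by omega : 0 < a))] at h1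
        linarith
      have h4 : a < 4 := by exact_mod_cast (show (a:ℚ) < 4 by linarith)
      omega
    have eb : b = 3 := by
      have h1 : (1:ℚ)/b ≥ 40/129 := by linarith
      have h2 : (b:ℚ) ≤ 129/40 := by
        rw [ge_iff_le, div_le_div_iff₀ (by norm_num) (by exact_mod_cast (by omega : 0 < b))] at h1
        linarith
      have h4 : b < 4 := by exact_mod_cast (show (b:ℚ) < 4 by linarith)
      omega
    have ec : c = 3 := by
      have h1 : (1:ℚ)/c ≥ 40/129 := by linarith
      have h2 : (c:ℚ) ≤ 129/40 := by
        rw [ge_iff_le, div_le_div_iff₀ (by norm_num) (by exact_mod_cast (by omega : 0 < c))] at h1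
        linarith
      have h4 : c < 4 := by exact_mod_cast (show (c:ℚ) < 4 by linarith)
      omega
    subst ea; subst eb; subst ec
    norm_num at key
    linarith
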